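/- (Zygmund's restriction theorem on the two-dimensional torus.) For every r > 0 and every square-summable family of complex coefficients (c_ω)_{ω∈ℤ²}, the trigonometric sum f(x,y) = ∑_{ω∈ℤ², ω₁²+ω₂²=r²} c_ω e^{2πi(ω₁x+ω₂y)} (a finite sum) satisfies ‖f‖_{L⁴([0,1]²)} ≤ 5^{1/4} · (∑_{ω∈ℤ²} |c_ω|²)^{1/2}. -/

import Mathlib

open MeasureTheory Complex Real
open scoped ComplexConjugate Classical

set_option maxHeartbeats 1000000

noncomputable def zgE (ν : ℤ × ℤ) (x y : ℝ) : ℂ :=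
  Complex.exp (2*(π:ℂ)*Complex.I*(ν.1:ℂ)*(x:ℂ)) * Complex.exp (2*(π:ℂ)*Complex.I*(ν.2:ℂ)*(y:ℂ))

lemma zgE_mul (μ ν : ℤ×ℤ) (x y : ℝ) : zgE μ x y * zgE ν x y = zgE (μ + ν) x y := by
  unfold zgE
  rw [mul_mul_mul_comm, ← Complex.exp_add, ← Complex.exp_add]
  congr 1 <;>
  · apply congrArg
    simp only [Prod.fst_add, Prod.snd_add]
    push_cast
    ring

lemma zgE_conj (ν : ℤ×ℤ) (x y : ℝ) : conj (zgE ν x y) = zgE (-ν) x y := by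
  unfold zgE
  rw [map_mul, ← Complex.exp_conj, ← Complex.exp_conj]
  congr 1 <;>
  · simp only [map_mul, Complex.conj_I, Complex.conj_ofReal, map_ofNat, map_intCast]
    apply congrArg
    simp only [Prod.fst_neg, Prod.snd_neg]
    push_cast
    ring

lemma zg_int_exp (n : ℤ) :
    ∫ x in Set.Icc (0:ℝ) 1, Complex.exp (2*(π:ℂ)*Complex.I*(n:ℂ)*(x:ℂ)) =
      if n = 0 then 1 else 0 := by
  rw [integral_Icc_eq_integral_Ioc, ← intervalIntegral.integral_of_le (by norm_num : (0:ℝ) ≤ 1)]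
  by_cases h : n = 0
  · simp [h]
  · have hne : (2*(π:ℂ)*Complex.I*n) ≠ 0 :=
      mul_ne_zero (mul_ne_zero (mul_ne_zero two_ne_zero (ofReal_ne_zero.2 pi_ne_zero)) I_ne_zero)
        (Int.cast_ne_zero.2 h)
    rw [if_neg h, integral_exp_mul_complex hne]
    have h1 : (2*(π:ℂ)*Complex.I*n) * ((1:ℝ):ℂ) = n * (2*π*Complex.I) := by push_cast; ring
    have h0 : (2*(π:ℂ)*Complex.I*n) * ((0:ℝ):ℂ) = 0 := by push_cast; ring
    rw [h1, h0, Complex.exp_int_mul_two_pi_mul_I, Complex.exp_zero, sub_self, zero_div]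

noncomputable def zgC (c : ℤ×ℤ → ℂ) (q : ((ℤ×ℤ)×(ℤ×ℤ))×((ℤ×ℤ)×(ℤ×ℤ))) : ℂ :=
  c q.1.1 * c q.1.2 * conj (c q.2.1) * conj (c q.2.2)

def zgS (q : ((ℤ×ℤ)×(ℤ×ℤ))×((ℤ×ℤ)×(ℤ×ℤ))) : ℤ×ℤ := q.1.1 + q.1.2 - q.2.1 - q.2.2

lemma zg_norm4 (z : ℂ) : ‖z‖^4 = ((z*z) * (conj z * conj z)).re := by
  have h : (z*z)*(conj z*conj z) = ((Complex.normSq z : ℝ) : ℂ) * ((Complex.normSq z : ℝ):ℂ) := by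
    rw [← Complex.mul_conj]; ring
  rw [h, ← Complex.ofReal_mul, Complex.ofReal_re, Complex.normSq_eq_norm_sq]
  ring

lemma zg_pair (c : ℤ×ℤ → ℂ) (F : Finset (ℤ×ℤ)) (x y : ℝ) :
    (∑ ω ∈ F, c ω * zgE ω x y) * (∑ ω ∈ F, c ω * zgE ω x y)
      = ∑ p ∈ F ×ˢ F, (c p.1 * c p.2) * zgE (p.1 + p.2) x y := by
  rw [Finset.sum_mul_sum]
  conv_rhs => rw [Finset.sum_product]
  exact Finset.sum_congr rfl fun a _ => Finset.sum_congr rfl fun b _ => by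
    rw [← zgE_mul]; ring

lemma zg_pair' (c : ℤ×ℤ → ℂ) (F : Finset (ℤ×ℤ)) (x y : ℝ) :
    (∑ ω ∈ F, conj (c ω) * zgE (-ω) x y) * (∑ ω ∈ F, conj (c ω) * zgE (-ω) x y)
      = ∑ p ∈ F ×ˢ F, (conj (c p.1) * conj (c p.2)) * zgE (-p.1 + -p.2) x y := by
  rw [Finset.sum_mul_sum]
  conv_rhs => rw [Finset.sum_product]
  exact Finset.sum_congr rfl fun a _ => Finset.sum_congr rfl fun b _ => by
    rw [← zgE_mul]; ring

lemma zg_expand (c : ℤ×ℤ → ℂ) (F : Finset (ℤ×ℤ)) (x y : ℝ) :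
    ‖∑ ω ∈ F, c ω * zgE ω x y‖^4 =
      (∑ q ∈ (F ×ˢ F) ×ˢ (F ×ˢ F), zgC c q * zgE (zgS q) x y).re := by
  rw [zg_norm4]
  congr 1
  have hconj : conj (∑ ω ∈ F, c ω * zgE ω x y) = ∑ ω ∈ F, conj (c ω) * zgE (-ω) x y := by
    rw [map_sum]
    exact Finset.sum_congr rfl fun ω _ => by rw [map_mul, zgE_conj]
  rw [hconj, zg_pair, zg_pair', Finset.sum_mul_sum]
  conv_rhs => rw [Finset.sum_product]
  refine Finset.sum_congr rfl fun p1 _ => Finset.sum_congr rfl fun p2 _ => ?_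
  have hz : zgS (p1, p2) = (p1.1 + p1.2) + (-p2.1 + -p2.2) := by
    simp only [zgS]
    ring
  conv_rhs => rw [hz, ← zgE_mul]
  simp only [zgC]
  ring

lemma zgE_cont_y (ν : ℤ×ℤ) (x : ℝ) : Continuous fun y => zgE ν x y := by
  unfold zgE
  fun_prop

lemma zg_integral_re {f : ℝ → ℂ} (μ : MeasureTheory.Measure ℝ)
    (hf : MeasureTheory.Integrable f μ) :
    ∫ x, (f x).re ∂μ = (∫ x, f x ∂μ).re := by
  simp only [← RCLike.re_eq_complex_re]
  exact integral_re hf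

lemma zg_inner (c : ℤ×ℤ → ℂ) (F : Finset (ℤ×ℤ)) (x : ℝ) :
    ∫ y in Set.Icc (0:ℝ) 1, ‖∑ ω ∈ F, c ω * zgE ω x y‖^4 =
      (∑ q ∈ (F ×ˢ F) ×ˢ (F ×ˢ F), (zgC c q * (if (zgS q).2 = 0 then 1 else 0)) *
        Complex.exp (2*(π:ℂ)*Complex.I*(((zgS q).1:ℤ):ℂ)*(x:ℂ))).re := by
  have hint : ∀ q ∈ (F ×ˢ F) ×ˢ (F ×ˢ F),
      Integrable (fun y => zgC c q * zgE (zgS q) x y) (volume.restrict (Set.Icc (0:ℝ) 1)) := by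
    intro q _
    exact (Continuous.integrableOn_Icc (by exact (continuous_const.mul (zgE_cont_y _ x))))
  calc ∫ y in Set.Icc (0:ℝ) 1, ‖∑ ω ∈ F, c ω * zgE ω x y‖^4
      = ∫ y in Set.Icc (0:ℝ) 1, (∑ q ∈ (F ×ˢ F) ×ˢ (F ×ˢ F), zgC c q * zgE (zgS q) x y).re := by
        congr 1; funext y; exact zg_expand c F x y
    _ = (∫ y in Set.Icc (0:ℝ) 1, ∑ q ∈ (F ×ˢ F) ×ˢ (F ×ˢ F), zgC c q * zgE (zgS q) x y).re :=
        zg_integral_re _ (integrable_finset_sum _ hint)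
    _ = (∑ q ∈ (F ×ˢ F) ×ˢ (F ×ˢ F), ∫ y in Set.Icc (0:ℝ) 1, zgC c q * zgE (zgS q) x y).re := by
        rw [integral_finset_sum _ hint]
    _ = _ := by
        congr 1
        refine Finset.sum_congr rfl fun q _ => ?_
        simp only [zgE]
        simp only [show ∀ y:ℝ, zgC c q * (Complex.exp (2*(π:ℂ)*Complex.I*(((zgS q).1:ℤ):ℂ)*(x:ℂ)) *
            Complex.exp (2*(π:ℂ)*Complex.I*(((zgS q).2:ℤ):ℂ)*(y:ℂ)))
          = (zgC c q * Complex.exp (2*(π:ℂ)*Complex.I*(((zgS q).1:ℤ):ℂ)*(x:ℂ))) *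
            Complex.exp (2*(π:ℂ)*Complex.I*(((zgS q).2:ℤ):ℂ)*(y:ℂ)) from fun y => by ring]
        rw [MeasureTheory.integral_const_mul, zg_int_exp]
        ring

lemma zg_double (c : ℤ×ℤ → ℂ) (F : Finset (ℤ×ℤ)) :
    ∫ x in Set.Icc (0:ℝ) 1, ∫ y in Set.Icc (0:ℝ) 1, ‖∑ ω ∈ F, c ω * zgE ω x y‖^4 =
      (∑ q ∈ (F ×ˢ F) ×ˢ (F ×ˢ F), zgC c q * (if (zgS q).1 = 0 then 1 else 0) *
        (if (zgS q).2 = 0 then 1 else 0)).re := by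
  have hint : ∀ q ∈ (F ×ˢ F) ×ˢ (F ×ˢ F),
      Integrable (fun x : ℝ => (zgC c q * (if (zgS q).2 = 0 then 1 else 0)) *
        Complex.exp (2*(π:ℂ)*Complex.I*(((zgS q).1:ℤ):ℂ)*(x:ℂ)))
        (volume.restrict (Set.Icc (0:ℝ) 1)) := by
    intro q _
    have hc : Continuous (fun x : ℝ => (zgC c q * (if (zgS q).2 = 0 then 1 else 0)) *
        Complex.exp (2*(π:ℂ)*Complex.I*(((zgS q).1:ℤ):ℂ)*(x:ℂ))) := by
      apply continuous_const.mul
      exact Complex.continuous_exp.comp (continuous_const.mul Complex.continuous_ofReal)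
    exact hc.integrableOn_Icc
  calc ∫ x in Set.Icc (0:ℝ) 1, ∫ y in Set.Icc (0:ℝ) 1, ‖∑ ω ∈ F, c ω * zgE ω x y‖^4
      = ∫ x in Set.Icc (0:ℝ) 1, (∑ q ∈ (F ×ˢ F) ×ˢ (F ×ˢ F),
          (zgC c q * (if (zgS q).2 = 0 then 1 else 0)) *
          Complex.exp (2*(π:ℂ)*Complex.I*(((zgS q).1:ℤ):ℂ)*(x:ℂ))).re := by
        congr 1; funext x; exact zg_inner c F x
    _ = (∫ x in Set.Icc (0:ℝ) 1, ∑ q ∈ (F ×ˢ F) ×ˢ (F ×ˢ F),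
          (zgC c q * (if (zgS q).2 = 0 then 1 else 0)) *
          Complex.exp (2*(π:ℂ)*Complex.I*(((zgS q).1:ℤ):ℂ)*(x:ℂ))).re :=
        zg_integral_re _ (integrable_finset_sum _ hint)
    _ = (∑ q ∈ (F ×ˢ F) ×ˢ (F ×ˢ F), ∫ x in Set.Icc (0:ℝ) 1,
          (zgC c q * (if (zgS q).2 = 0 then 1 else 0)) *
          Complex.exp (2*(π:ℂ)*Complex.I*(((zgS q).1:ℤ):ℂ)*(x:ℂ))).re := by
        rw [integral_finset_sum _ hint]
    _ = _ := by
        congr 1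
        refine Finset.sum_congr rfl fun q _ => ?_
        rw [MeasureTheory.integral_const_mul, zg_int_exp]
        ring


lemma comb (F : Finset (ℤ×ℤ)) (m : ℤ×ℤ → ℝ) (hm : ∀ ω, 0 ≤ m ω)
    (hcard : ∀ ν : ℤ×ℤ, ν ≠ 0 → ((F ×ˢ F).filter (fun p => p.1 + p.2 = ν)).card ≤ 2) :
    ∑ q ∈ ((F ×ˢ F) ×ˢ (F ×ˢ F)).filter (fun q => q.1.1 + q.1.2 = q.2.1 + q.2.2),
      (m q.1.1 * m q.1.2) * (m q.2.1 * m q.2.2) ≤ 3 * (∑ ω ∈ F, m ω^2)^2 := by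
  set S := ∑ ω ∈ F, m ω^2 with hS
  have hS0 : 0 ≤ S := Finset.sum_nonneg (fun ω _ => sq_nonneg _)
  set W : ℤ×ℤ → ℝ := fun ν => ∑ p ∈ (F ×ˢ F).filter (fun p => p.1 + p.2 = ν), m p.1 * m p.2 with hW
  have hW0 : ∀ ν, 0 ≤ W ν := fun ν => Finset.sum_nonneg (fun p _ => mul_nonneg (hm _) (hm _))
  set V := (F ×ˢ F).image (fun p : (ℤ×ℤ)×(ℤ×ℤ) => p.1 + p.2) with hV
  -- Step 1 : LHS = ∑ ν ∈ V, (W ν)^2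
  have step1 : ∑ q ∈ ((F ×ˢ F) ×ˢ (F ×ˢ F)).filter (fun q => q.1.1 + q.1.2 = q.2.1 + q.2.2),
      (m q.1.1 * m q.1.2) * (m q.2.1 * m q.2.2) = ∑ ν ∈ V, (W ν)^2 := by
    rw [Finset.sum_filter, Finset.sum_product]
    have inner : ∀ p ∈ F ×ˢ F, (∑ p' ∈ F ×ˢ F, if p.1 + p.2 = p'.1 + p'.2 then
        (m p.1 * m p.2) * (m p'.1 * m p'.2) else 0) = (m p.1 * m p.2) * W (p.1 + p.2) := by
      intro p _
      rw [hW]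
      simp only []
      rw [Finset.mul_sum, Finset.sum_filter]
      exact Finset.sum_congr rfl (fun p' _ => if_congr eq_comm rfl rfl)
    rw [Finset.sum_congr rfl inner]
    rw [← Finset.sum_fiberwise_of_maps_to (g := fun p : (ℤ×ℤ)×(ℤ×ℤ) => p.1 + p.2)
      (t := V) (fun p hp => Finset.mem_image_of_mem _ hp)]
    apply Finset.sum_congr rfl
    intro ν _
    rw [sq, hW]
    simp only []
    rw [Finset.sum_mul]
    apply Finset.sum_congr rfl
    intro p hp
    rw [Finset.mem_filter] at hp
    rw [hp.2]
  rw [step1]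
  -- fiber second moments are at most S
  have fiber1 : ∀ ν : ℤ×ℤ,
      ∑ p ∈ (F ×ˢ F).filter (fun p => p.1 + p.2 = ν), m p.1 ^ 2 ≤ S := by
    intro ν
    have hinj : ∀ p ∈ (F ×ˢ F).filter (fun p => p.1 + p.2 = ν),
        ∀ q ∈ (F ×ˢ F).filter (fun p => p.1 + p.2 = ν), p.1 = q.1 → p = q := by
      intro p hp q hq h
      rw [Finset.mem_filter] at hp hq
      have h2 : p.2 = q.2 := by
        have := hp.2.trans hq.2.symm
        rw [h] at this
        exact add_left_cancel this
      exact Prod.ext h h2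
    rw [← Finset.sum_image (f := fun a => m a ^ 2) hinj]
    apply Finset.sum_le_sum_of_subset_of_nonneg
    · intro a ha
      rw [Finset.mem_image] at ha
      obtain ⟨p, hp, rfl⟩ := ha
      rw [Finset.mem_filter, Finset.mem_product] at hp
      exact hp.1.1
    · exact fun a _ _ => sq_nonneg _
  have fiber2 : ∀ ν : ℤ×ℤ,
      ∑ p ∈ (F ×ˢ F).filter (fun p => p.1 + p.2 = ν), m p.2 ^ 2 ≤ S := by
    intro ν
    have hinj : ∀ p ∈ (F ×ˢ F).filter (fun p => p.1 + p.2 = ν),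
        ∀ q ∈ (F ×ˢ F).filter (fun p => p.1 + p.2 = ν), p.2 = q.2 → p = q := by
      intro p hp q hq h
      rw [Finset.mem_filter] at hp hq
      have h1 : p.1 = q.1 := by
        have := hp.2.trans hq.2.symm
        rw [h] at this
        exact add_right_cancel this
      exact Prod.ext h1 h
    rw [← Finset.sum_image (f := fun a => m a ^ 2) hinj]
    apply Finset.sum_le_sum_of_subset_of_nonneg
    · intro a ha
      rw [Finset.mem_image] at ha
      obtain ⟨p, hp, rfl⟩ := ha
      rw [Finset.mem_filter, Finset.mem_product] at hp
      exact hp.1.2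
    · exact fun a _ _ => sq_nonneg _
  -- split off ν = 0
  rw [← Finset.sum_filter_add_sum_filter_not V (fun ν => ν = 0)]
  have part0 : ∑ ν ∈ V.filter (fun ν => ν = 0), (W ν)^2 ≤ S^2 := by
    have hsub : V.filter (fun ν => ν = 0) ⊆ {0} := by
      intro ν hν; rw [Finset.mem_filter] at hν; simp [hν.2]
    calc ∑ ν ∈ V.filter (fun ν => ν = 0), (W ν)^2
        ≤ ∑ ν ∈ {(0:ℤ×ℤ)}, (W ν)^2 :=
          Finset.sum_le_sum_of_subset_of_nonneg hsub (fun ν _ _ => sq_nonneg _)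
      _ = (W 0)^2 := Finset.sum_singleton _ _
      _ ≤ S^2 := by
          apply pow_le_pow_left₀ (hW0 0) ?_
          rw [hW]
          simp only []
          calc ∑ p ∈ (F ×ˢ F).filter (fun p => p.1 + p.2 = 0), m p.1 * m p.2
              ≤ ∑ p ∈ (F ×ˢ F).filter (fun p => p.1 + p.2 = 0), (m p.1^2 + m p.2^2)/2 := by
                apply Finset.sum_le_sum
                intro p _
                nlinarith [sq_nonneg (m p.1 - m p.2)]
            _ = ((∑ p ∈ (F ×ˢ F).filter (fun p => p.1 + p.2 = 0), m p.1^2)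
                + (∑ p ∈ (F ×ˢ F).filter (fun p => p.1 + p.2 = 0), m p.2^2))/2 := by
                rw [← Finset.sum_add_distrib, ← Finset.sum_div]
            _ ≤ (S + S)/2 := by
                apply div_le_div_of_nonneg_right ?_ (by norm_num)
                exact add_le_add (fiber1 0) (fiber2 0)
            _ = S := by ring
  have part1 : ∑ ν ∈ V.filter (fun ν => ¬ ν = 0), (W ν)^2 ≤ 2 * S^2 := by
    calc ∑ ν ∈ V.filter (fun ν => ¬ ν = 0), (W ν)^2
        ≤ ∑ ν ∈ V.filter (fun ν => ¬ ν = 0),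
            2 * ∑ p ∈ (F ×ˢ F).filter (fun p => p.1 + p.2 = ν), (m p.1 * m p.2)^2 := by
          apply Finset.sum_le_sum
          intro ν hν
          rw [Finset.mem_filter] at hν
          calc (W ν)^2 ≤ ((F ×ˢ F).filter (fun p => p.1 + p.2 = ν)).card *
              ∑ p ∈ (F ×ˢ F).filter (fun p => p.1 + p.2 = ν), (m p.1 * m p.2)^2 := by
                rw [hW]; exact sq_sum_le_card_mul_sum_sq
            _ ≤ 2 * ∑ p ∈ (F ×ˢ F).filter (fun p => p.1 + p.2 = ν), (m p.1 * m p.2)^2 := by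
                apply mul_le_mul_of_nonneg_right ?_
                  (Finset.sum_nonneg fun p _ => sq_nonneg _)
                exact_mod_cast Nat.cast_le.mpr (hcard ν hν.2)
      _ = 2 * ∑ ν ∈ V.filter (fun ν => ¬ ν = 0),
            ∑ p ∈ (F ×ˢ F).filter (fun p => p.1 + p.2 = ν), (m p.1 * m p.2)^2 := by
          rw [Finset.mul_sum]
      _ ≤ 2 * ∑ ν ∈ V, ∑ p ∈ (F ×ˢ F).filter (fun p => p.1 + p.2 = ν), (m p.1 * m p.2)^2 := by
          apply mul_le_mul_of_nonneg_left ?_ (by norm_num)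
          apply Finset.sum_le_sum_of_subset_of_nonneg (Finset.filter_subset _ _)
          exact fun ν _ _ => Finset.sum_nonneg fun p _ => sq_nonneg _
      _ = 2 * ∑ p ∈ F ×ˢ F, (m p.1 * m p.2)^2 := by
          rw [Finset.sum_fiberwise_of_maps_to (fun p hp => Finset.mem_image_of_mem _ hp)]
      _ = 2 * S^2 := by
          congr 1
          rw [hS, sq, Finset.sum_mul_sum, Finset.sum_product]
          apply Finset.sum_congr rfl
          intro a _
          apply Finset.sum_congr rfl
          intro b _
          ring
  linarith


lemma circle_line (a b ρ u1 u2 v1 v2 : ℝ) (hab : a^2 + b^2 ≠ 0)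
    (hu : u1^2 + u2^2 = ρ) (hv : v1^2 + v2^2 = ρ)
    (hu2 : 2*(a*u1 + b*u2) = a^2 + b^2) (hv2 : 2*(a*v1 + b*v2) = a^2 + b^2) :
    (u1 = v1 ∧ u2 = v2) ∨ (u1 + v1 = a ∧ u2 + v2 = b) := by
  have hsq : (a*u2 - b*u1)^2 = (a*v2 - b*v1)^2 := by
    linear_combination (a^2+b^2)*hu - (a^2+b^2)*hv -
      (1/2)*(a*u1+b*u2+(a^2+b^2)/2)*hu2 + (1/2)*(a*v1+b*v2+(a^2+b^2)/2)*hv2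
  rcases sq_eq_sq_iff_eq_or_eq_neg.mp hsq with hd | hd
  · left
    constructor
    · have h11 : (a^2+b^2)*(u1-v1) = 0 := by
        linear_combination (a/2)*hu2 - (a/2)*hv2 - b*hd
      have := (mul_eq_zero.mp h11).resolve_left hab
      linarith
    · have h12 : (a^2+b^2)*(u2-v2) = 0 := by
        linear_combination (b/2)*hu2 - (b/2)*hv2 + a*hd
      have := (mul_eq_zero.mp h12).resolve_left hab
      linarith
  · right
    constructor
    · have h21 : (a^2+b^2)*(u1+v1) = (a^2+b^2)*a := by
        linear_combination (a/2)*hu2 + (a/2)*hv2 - b*hd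
      exact mul_left_cancel₀ hab h21
    · have h22 : (a^2+b^2)*(u2+v2) = (a^2+b^2)*b := by
        linear_combination (b/2)*hu2 + (b/2)*hv2 + a*hd
      exact mul_left_cancel₀ hab h22

lemma card_fiber (r : ℝ) (F : Finset (ℤ×ℤ))
    (hF : ∀ ω : ℤ×ℤ, ω ∈ F → (ω.1:ℝ)^2 + (ω.2:ℝ)^2 = r^2)
    (ν : ℤ×ℤ) (hν : ν ≠ 0) :
    ((F ×ˢ F).filter (fun p => p.1 + p.2 = ν)).card ≤ 2 := by
  set a : ℝ := (ν.1 : ℝ) with ha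
  set b : ℝ := (ν.2 : ℝ) with hb
  have hab : a^2 + b^2 ≠ 0 := by
    intro h
    have h1 : a = 0 := by nlinarith [sq_nonneg a, sq_nonneg b]
    have h2 : b = 0 := by nlinarith [sq_nonneg a, sq_nonneg b]
    have h1' : ν.1 = 0 := by exact_mod_cast ha.symm.trans h1
    have h2' : ν.2 = 0 := by exact_mod_cast hb.symm.trans h2
    exact hν (by simp [Prod.ext_iff, h1', h2'])
  by_contra h
  push_neg at h
  obtain ⟨p, q, s, hp, hq, hs, hpq, hps, hqs⟩ := Finset.two_lt_card_iff.mp h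
  -- basic facts about an element of the fiber
  have fact : ∀ t : (ℤ×ℤ)×(ℤ×ℤ), t ∈ (F ×ˢ F).filter (fun p => p.1 + p.2 = ν) →
      ((t.1.1:ℝ)^2 + (t.1.2:ℝ)^2 = r^2) ∧
      (2*(a*(t.1.1:ℝ) + b*(t.1.2:ℝ)) = a^2 + b^2) ∧ t.2 = ν - t.1 := by
    intro t ht
    rw [Finset.mem_filter, Finset.mem_product] at ht
    have hc1 := hF t.1 ht.1.1
    have hc2 := hF t.2 ht.1.2
    have h2 : t.2 = ν - t.1 := eq_sub_of_add_eq' ht.2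
    refine ⟨hc1, ?_, h2⟩
    have e1 : (t.2.1 : ℝ) = a - (t.1.1:ℝ) := by
      rw [h2, Prod.fst_sub]; push_cast; rw [ha]
    have e2 : (t.2.2 : ℝ) = b - (t.1.2:ℝ) := by
      rw [h2, Prod.snd_sub]; push_cast; rw [hb]
    rw [e1, e2] at hc2
    linear_combination hc1 - hc2
  obtain ⟨hcp, hlp, hrp⟩ := fact p hp
  obtain ⟨hcq, hlq, hrq⟩ := fact q hq
  obtain ⟨hcs, hls, hrs⟩ := fact s hs
  -- pairwise: distinct elements have first components summing to ν
  have key : ∀ t u : (ℤ×ℤ)×(ℤ×ℤ),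
      ((t.1.1:ℝ)^2 + (t.1.2:ℝ)^2 = r^2) → ((u.1.1:ℝ)^2 + (u.1.2:ℝ)^2 = r^2) →
      (2*(a*(t.1.1:ℝ) + b*(t.1.2:ℝ)) = a^2 + b^2) →
      (2*(a*(u.1.1:ℝ) + b*(u.1.2:ℝ)) = a^2 + b^2) →
      t.2 = ν - t.1 → u.2 = ν - u.1 → t ≠ u →
      ((t.1.1:ℝ) + (u.1.1:ℝ) = a ∧ (t.1.2:ℝ) + (u.1.2:ℝ) = b) := by
    intro t u hct hcu hlt hlu hrt hru htu
    rcases circle_line a b (r^2) _ _ _ _ hab hct hcu hlt hlu with ⟨h1, h2⟩ | hgood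
    · exfalso
      have e1 : t.1 = u.1 := Prod.ext (by exact_mod_cast h1) (by exact_mod_cast h2)
      exact htu (Prod.ext e1 (by rw [hrt, hru, e1]))
    · exact hgood
  obtain ⟨k1, k2⟩ := key p q hcp hcq hlp hlq hrp hrq hpq
  obtain ⟨l1, l2⟩ := key p s hcp hcs hlp hls hrp hrs hps
  apply hqs
  have e1 : q.1 = s.1 := by
    apply Prod.ext
    · exact_mod_cast (by linarith : (q.1.1:ℝ) = (s.1.1:ℝ))
    · exact_mod_cast (by linarith : (q.1.2:ℝ) = (s.1.2:ℝ))
  exact Prod.ext e1 (by rw [hrq, hrs, e1])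


lemma zg_bound (c : ℤ×ℤ → ℂ) (F : Finset (ℤ×ℤ))
    (hcard : ∀ ν : ℤ×ℤ, ν ≠ 0 → ((F ×ˢ F).filter (fun p => p.1 + p.2 = ν)).card ≤ 2) :
    ∫ x in Set.Icc (0:ℝ) 1, ∫ y in Set.Icc (0:ℝ) 1, ‖∑ ω ∈ F, c ω * zgE ω x y‖^4 ≤
      3 * (∑ ω ∈ F, ‖c ω‖^2)^2 := by
  rw [zg_double]
  have hiff : ∀ q : ((ℤ×ℤ)×(ℤ×ℤ))×((ℤ×ℤ)×(ℤ×ℤ)),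
      ((zgS q).1 = 0 ∧ (zgS q).2 = 0) ↔ (q.1.1 + q.1.2 = q.2.1 + q.2.2) := by
    intro q
    unfold zgS
    simp only [Prod.fst_sub, Prod.snd_sub, Prod.fst_add, Prod.snd_add, Prod.ext_iff]
    omega
  have h1 : (∑ q ∈ (F ×ˢ F) ×ˢ (F ×ˢ F), zgC c q * (if (zgS q).1 = 0 then 1 else 0) *
        (if (zgS q).2 = 0 then 1 else 0)) =
      ∑ q ∈ ((F ×ˢ F) ×ˢ (F ×ˢ F)).filter (fun q => q.1.1 + q.1.2 = q.2.1 + q.2.2), zgC c q := by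
    rw [Finset.sum_filter]
    refine Finset.sum_congr rfl fun q _ => ?_
    by_cases h : q.1.1 + q.1.2 = q.2.1 + q.2.2
    · obtain ⟨h1, h2⟩ := (hiff q).mpr h
      rw [if_pos h1, if_pos h2, if_pos h, mul_one, mul_one]
    · rw [if_neg h]
      have hn := (not_iff_not.mpr (hiff q)).mpr h
      rcases not_and_or.mp hn with h1 | h2
      · rw [if_neg h1, mul_zero, zero_mul]
      · rw [if_neg h2, mul_zero]
  rw [h1]
  have h2 : (∑ q ∈ ((F ×ˢ F) ×ˢ (F ×ˢ F)).filter
        (fun q => q.1.1 + q.1.2 = q.2.1 + q.2.2), zgC c q).re ≤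
      ∑ q ∈ ((F ×ˢ F) ×ˢ (F ×ˢ F)).filter (fun q => q.1.1 + q.1.2 = q.2.1 + q.2.2),
        ‖zgC c q‖ := by
    refine (Complex.re_le_norm _).trans ?_
    exact norm_sum_le _ _
  refine h2.trans ?_
  have h3 : ∑ q ∈ ((F ×ˢ F) ×ˢ (F ×ˢ F)).filter (fun q => q.1.1 + q.1.2 = q.2.1 + q.2.2),
      ‖zgC c q‖ =
      ∑ q ∈ ((F ×ˢ F) ×ˢ (F ×ˢ F)).filter (fun q => q.1.1 + q.1.2 = q.2.1 + q.2.2),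
      (‖c q.1.1‖ * ‖c q.1.2‖) * (‖c q.2.1‖ * ‖c q.2.2‖) := by
    refine Finset.sum_congr rfl fun q _ => ?_
    simp only [zgC, norm_mul, RCLike.norm_conj]
    ring
  rw [h3]
  exact comb F (fun ω => ‖c ω‖) (fun ω => norm_nonneg _) hcard


/-- **Zygmund's restriction theorem on the two-dimensional torus.**
For every `r > 0` and square-summable coefficients `(c ω)`, the trigonometric sum
`f(x,y) = ∑_{ω ∈ ℤ², ω₁² + ω₂² = r²} c ω e^{2πi(ω₁x + ω₂y)}` satisfies
`‖f‖_{L⁴([0,1]²)} ≤ 5^{1/4} (∑ |c ω|²)^{1/2}`. -/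
theorem zygmund_restriction (r : ℝ) (hr : 0 < r) (c : ℤ × ℤ → ℂ)
    (hc : Summable fun ω : ℤ × ℤ => ‖c ω‖ ^ 2) :
    (∫ x in Set.Icc (0:ℝ) 1, ∫ y in Set.Icc (0:ℝ) 1,
        ‖∑' ω : ℤ × ℤ, if ((ω.1 : ℝ) ^ 2 + (ω.2 : ℝ) ^ 2 = r ^ 2) then
            c ω * Complex.exp (2 * (π : ℂ) * Complex.I *
              ((ω.1 : ℂ) * (x : ℂ) + (ω.2 : ℂ) * (y : ℂ)))
          else 0‖ ^ 4) ^ ((1 : ℝ) / 4)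
      ≤ (5 : ℝ) ^ ((1 : ℝ) / 4) * (∑' ω : ℤ × ℤ, ‖c ω‖ ^ 2) ^ ((1 : ℝ) / 2) := by
    -- the frequency set is finite
  set M : ℤ := (⌈r⌉₊ : ℤ) with hM
  have hrM : r ≤ (M:ℝ) := by
    rw [hM]
    push_cast
    exact Nat.le_ceil r
  have hfin : {ω : ℤ×ℤ | (ω.1:ℝ)^2 + (ω.2:ℝ)^2 = r^2}.Finite := by
    apply Set.Finite.subset (Set.finite_Icc ((-M, -M) : ℤ×ℤ) ((M, M) : ℤ×ℤ))
    rintro ⟨m, n⟩ h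
    simp only [Set.mem_setOf_eq] at h
    have h1 : ((m:ℝ))^2 ≤ r^2 := by nlinarith [sq_nonneg (n:ℝ)]
    have h2 : ((n:ℝ))^2 ≤ r^2 := by nlinarith [sq_nonneg (m:ℝ)]
    have e1 : (m:ℝ) ≤ (M:ℝ) := by nlinarith
    have e2 : -(M:ℝ) ≤ (m:ℝ) := by nlinarith
    have e3 : (n:ℝ) ≤ (M:ℝ) := by nlinarith
    have e4 : -(M:ℝ) ≤ (n:ℝ) := by nlinarith
    simp only [Set.mem_Icc, Prod.le_def]
    refine ⟨⟨?_, ?_⟩, ?_, ?_⟩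
    · exact_mod_cast e2
    · exact_mod_cast e4
    · exact_mod_cast e1
    · exact_mod_cast e3
  set F := hfin.toFinset with hFdef
  have hmemF : ∀ ω : ℤ×ℤ, ω ∈ F ↔ (ω.1:ℝ)^2 + (ω.2:ℝ)^2 = r^2 := fun ω => hfin.mem_toFinset
  have hF : ∀ ω ∈ F, (ω.1:ℝ)^2 + (ω.2:ℝ)^2 = r^2 := fun ω h => (hmemF ω).mp h
  have hg : ∀ x y : ℝ, (∑' ω : ℤ × ℤ, if ((ω.1 : ℝ) ^ 2 + (ω.2 : ℝ) ^ 2 = r ^ 2) then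
      c ω * Complex.exp (2 * (π : ℂ) * Complex.I *
        ((ω.1 : ℂ) * (x : ℂ) + (ω.2 : ℂ) * (y : ℂ))) else 0)
      = ∑ ω ∈ F, c ω * zgE ω x y := by
    intro x y
    rw [tsum_eq_sum (s := F)
      (fun ω hω => if_neg (fun hcc => hω ((hmemF ω).mpr hcc)))]
    refine Finset.sum_congr rfl fun ω hω => ?_
    rw [if_pos ((hmemF ω).mp hω)]
    unfold zgE
    rw [← Complex.exp_add]
    congr 1
    ring_nf
  set S := ∑' ω : ℤ×ℤ, ‖c ω‖^2 with hSdef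
  have hS0 : 0 ≤ S := tsum_nonneg (fun ω => sq_nonneg _)
  have hSF : ∑ ω ∈ F, ‖c ω‖^2 ≤ S := Summable.sum_le_tsum F (fun ω _ => sq_nonneg _) hc
  have hSF0 : 0 ≤ ∑ ω ∈ F, ‖c ω‖^2 := Finset.sum_nonneg fun ω _ => sq_nonneg _
  have hmain : ∫ x in Set.Icc (0:ℝ) 1, ∫ y in Set.Icc (0:ℝ) 1,
      ‖∑ ω ∈ F, c ω * zgE ω x y‖^4 ≤ 5 * S^2 := by
    refine (zg_bound c F (card_fiber r F hF)).trans ?_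
    nlinarith [hSF, hSF0, hS0]
  have hnn : 0 ≤ ∫ x in Set.Icc (0:ℝ) 1, ∫ y in Set.Icc (0:ℝ) 1,
      ‖∑ ω ∈ F, c ω * zgE ω x y‖^4 :=
    integral_nonneg fun x => integral_nonneg fun y => by positivity
  have hrw : (∫ x in Set.Icc (0:ℝ) 1, ∫ y in Set.Icc (0:ℝ) 1,
      ‖∑' ω : ℤ × ℤ, if ((ω.1 : ℝ) ^ 2 + (ω.2 : ℝ) ^ 2 = r ^ 2) then
        c ω * Complex.exp (2 * (π : ℂ) * Complex.I *
          ((ω.1 : ℂ) * (x : ℂ) + (ω.2 : ℂ) * (y : ℂ)))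
      else 0‖ ^ 4)
      = ∫ x in Set.Icc (0:ℝ) 1, ∫ y in Set.Icc (0:ℝ) 1,
        ‖∑ ω ∈ F, c ω * zgE ω x y‖^4 := by
    congr 1
    funext x
    congr 1
    funext y
    rw [hg x y]
  rw [hrw]
  calc (∫ x in Set.Icc (0:ℝ) 1, ∫ y in Set.Icc (0:ℝ) 1,
        ‖∑ ω ∈ F, c ω * zgE ω x y‖^4) ^ ((1:ℝ)/4)
      ≤ (5 * S^2) ^ ((1:ℝ)/4) := Real.rpow_le_rpow hnn hmain (by norm_num)
    _ = (5:ℝ) ^ ((1:ℝ)/4) * S ^ ((1:ℝ)/2) := by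
        rw [Real.mul_rpow (by norm_num) (sq_nonneg S)]
        congr 1
        rw [← Real.rpow_natCast S 2, ← Real.rpow_mul hS0]
        norm_num
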